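/- arXiv:1112.1318 — 6 statements merged into one kernel-verified Lean document; each statement's English description precedes it below -/
import Mathlib

section
/- Let μ > 0 and a > 2√((μ+1)/μ). Then there exists a unique x̄ ∈ (2/a, 1] such that ((a²−1)x̄² − 2a x̄ + 1)/(a x̄ − 1)^{2μ+2} + x̄² − 1 = 0. -/
open Set Real Filter Topology

noncomputable def psiF (μ a x : ℝ) : ℝ :=
  Real.log ((a*x-1)^2 - x^2) - Real.log (1-x^2) - (2*μ+2) * Real.log (a*x-1)

noncomputable def FF (μ a x : ℝ) : ℝ :=
  2*x/((a*x-1)^2 - x^2) + 2*x*(a*x-1)/(1-x^2) - 2*μ*a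

lemma basics {a x : ℝ} (ha : 2 < a) (h1 : 2/a ≤ x) (h2 : x < 1) :
    2 ≤ a*x ∧ 0 < x ∧ 0 < 1 - x^2 ∧ 0 < (a*x-1)^2 - x^2 := by
  have ha0 : 0 < a := by linarith
  have hax : 2 ≤ a*x := by
    have := (div_le_iff₀ ha0).mp h1
    linarith [this]
  have hx0 : 0 < x := by nlinarith
  refine ⟨hax, hx0, by nlinarith, ?_⟩
  have hp1 : 0 < a*x-1-x := by linarith
  have hp2 : 0 < a*x-1+x := by linarith
  nlinarith [mul_pos hp1 hp2]

lemma hasDerivAt_psiF {μ a x : ℝ} (ha : 2 < a) (h1 : 2/a ≤ x) (h2 : x < 1) :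
    HasDerivAt (psiF μ a) (FF μ a x / (a*x-1)) x := by
  obtain ⟨hax, hx0, hV, hU⟩ := basics ha h1 h2
  have ht1 : (1:ℝ) ≤ a*x - 1 := by linarith
  have ht0 : a*x - 1 ≠ 0 := by linarith
  have hU0 : (a*x-1)^2 - x^2 ≠ 0 := ne_of_gt hU
  have hV0 : 1 - x^2 ≠ 0 := ne_of_gt hV
  have dt : HasDerivAt (fun y => a*y-1) a x := by
    simpa using ((hasDerivAt_id x).const_mul a).sub_const 1
  have dU : HasDerivAt (fun y => (a*y-1)^2 - y^2)
      ((2:ℕ) * (a*x-1)^(2-1) * a - (2:ℕ) * x^(2-1)) x :=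
    (dt.pow 2).sub (hasDerivAt_pow 2 x)
  have dV : HasDerivAt (fun y => 1 - y^2) (0 - (2:ℕ) * x^(2-1)) x :=
    (hasDerivAt_const x (1:ℝ)).sub (hasDerivAt_pow 2 x)
  have d1 := dU.log hU0
  have d2 := dV.log hV0
  have d3 := (dt.log ht0).const_mul (2*μ+2)
  have dd := (d1.sub d2).sub d3
  refine dd.congr_deriv ?_
  rw [FF]
  field_simp
  ring

lemma hasDerivAt_FF {μ a x : ℝ} (ha : 2 < a) (h1 : 2/a ≤ x) (h2 : x < 1) :
    HasDerivAt (FF μ a)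
      (2*(1-(a^2-1)*x^2)/(((a*x-1)^2-x^2)^2) + 2*(2*a*x-1-x^2)/((1-x^2)^2)) x := by
  obtain ⟨hax, hx0, hV, hU⟩ := basics ha h1 h2
  have hU0 : (a*x-1)^2 - x^2 ≠ 0 := ne_of_gt hU
  have hV0 : 1 - x^2 ≠ 0 := ne_of_gt hV
  have dt : HasDerivAt (fun y => a*y-1) a x := by
    simpa using ((hasDerivAt_id x).const_mul a).sub_const 1
  have dU : HasDerivAt (fun y => (a*y-1)^2 - y^2)
      ((2:ℕ) * (a*x-1)^(2-1) * a - (2:ℕ) * x^(2-1)) x :=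
    (dt.pow 2).sub (hasDerivAt_pow 2 x)
  have dV : HasDerivAt (fun y => 1 - y^2) (0 - (2:ℕ) * x^(2-1)) x :=
    (hasDerivAt_const x (1:ℝ)).sub (hasDerivAt_pow 2 x)
  have dn1 : HasDerivAt (fun y : ℝ => 2*y) 2 x := by
    simpa using (hasDerivAt_id x).const_mul 2
  have dn2 : HasDerivAt (fun y : ℝ => 2*y*(a*y-1)) (2*(a*x-1) + 2*x*a) x := dn1.mul dt
  have q1 := dn1.div dU hU0
  have q2 := dn2.div dV hV0
  have dd := (q1.add q2).sub_const (2*μ*a)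
  have : FF μ a = fun y => 2*y/((a*y-1)^2 - y^2) + 2*y*(a*y-1)/(1-y^2) - 2*μ*a := rfl
  rw [this]
  refine dd.congr_deriv ?_
  field_simp
  ring

lemma FF'_pos {a x : ℝ} (ha : 2 < a) (h1 : 2/a < x) (h2 : x < 1) :
    0 < 2*(1-(a^2-1)*x^2)/(((a*x-1)^2-x^2)^2) + 2*(2*a*x-1-x^2)/((1-x^2)^2) := by
  obtain ⟨hax, hx0, hV, hU⟩ := basics ha h1.le h2
  have haxs : 2 < a*x := by
    have ha0 : (0:ℝ) < a := by linarith
    have := (div_lt_iff₀ ha0).mp h1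
    linarith
  have hU0 : ((a*x-1)^2 - x^2) ≠ 0 := ne_of_gt hU
  have hV0 : (1 - x^2) ≠ 0 := ne_of_gt hV
  have hPu : 0 < ((a*x-1)^2 - x^2) - (1-x^2) := by nlinarith
  have hq : 0 < 2*a*x - 2 := by linarith
  have key : 2*(1-(a^2-1)*x^2)/(((a*x-1)^2-x^2)^2) + 2*(2*a*x-1-x^2)/((1-x^2)^2)
      = (2 * ((((a*x-1)^2-x^2) - (1-x^2)) *
          ((2*a*x-2)*(((a*x-1)^2-x^2)+(1-x^2)) + (1-x^2)*((a*x-1)^2-x^2))))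
        / ((((a*x-1)^2-x^2))^2 * (1-x^2)^2) := by
    field_simp
    ring
  rw [key]
  apply div_pos
  · apply mul_pos (by norm_num)
    apply mul_pos hPu
    have := mul_pos hq (by linarith : (0:ℝ) < ((a*x-1)^2-x^2)+(1-x^2))
    nlinarith [mul_pos hV hU]
  · positivity

lemma FF_mono {μ a : ℝ} (ha : 2 < a) : StrictMonoOn (FF μ a) (Set.Ico (2/a) 1) := by
  have ha0 : (0:ℝ) < a := by linarith
  apply strictMonoOn_of_deriv_pos (convex_Ico _ _)
  · intro x hx
    exact ((hasDerivAt_FF ha hx.1 hx.2).continuousAt).continuousWithinAt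
  · intro x hx
    rw [interior_Ico] at hx
    rw [(hasDerivAt_FF ha hx.1.le hx.2).deriv]
    exact FF'_pos ha hx.1 hx.2

noncomputable def wF (μ a x : ℝ) : ℝ :=
  ((a^2 - 1) * x^2 - 2*a*x + 1) / (a*x - 1) ^ (2*μ+2) + x^2 - 1

lemma wF_eq {μ a x : ℝ} (ha : 2 < a) (h1 : 2/a ≤ x) (h2 : x < 1) :
    wF μ a x = (1-x^2) * (Real.exp (psiF μ a x) - 1) := by
  obtain ⟨hax, hx0, hV, hU⟩ := basics ha h1 h2
  have ht : 0 < a*x - 1 := by linarith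
  have hnum : (a^2-1)*x^2 - 2*a*x + 1 = (a*x-1)^2 - x^2 := by ring
  rw [wF, hnum, psiF, Real.rpow_def_of_pos ht, Real.exp_sub, Real.exp_sub,
    Real.exp_log hU, Real.exp_log hV]
  rw [show Real.exp ((2*μ+2) * Real.log (a*x-1)) = Real.exp (Real.log (a*x-1) * (2*μ+2)) by
    rw [mul_comm]]
  have hE : Real.exp (Real.log (a*x-1) * (2*μ+2)) ≠ 0 := Real.exp_ne_zero _
  field_simp
  ring

theorem stmt2 (μ a : ℝ) (hμ : 0 < μ) (ha : 2 * Real.sqrt ((μ+1)/μ) < a) :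
    ∃! x : ℝ, x ∈ Set.Ioc (2/a) 1 ∧
      ((a^2 - 1) * x^2 - 2*a*x + 1) / (a*x - 1) ^ (2*μ+2) + x^2 - 1 = 0 := by
  -- basic consequences of the hypothesis
  have hs0 : 0 ≤ Real.sqrt ((μ+1)/μ) := Real.sqrt_nonneg _
  have hs2 : Real.sqrt ((μ+1)/μ) ^ 2 = (μ+1)/μ := Real.sq_sqrt (by positivity)
  have hdiv : μ * ((μ+1)/μ) = μ + 1 := by field_simp
  have hs1 : 1 ≤ Real.sqrt ((μ+1)/μ) := by
    by_contra h
    push_neg at h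
    have h2 : Real.sqrt ((μ+1)/μ) ^ 2 < 1 := by nlinarith [hs0]
    rw [hs2, div_lt_one hμ] at h2
    linarith
  have ha2 : 2 < a := by nlinarith
  have ha0 : (0:ℝ) < a := by linarith
  have hkey : 4*μ + 4 < μ * a^2 := by
    have h2s : 0 < a - 2*Real.sqrt ((μ+1)/μ) := by linarith
    have h2s' : 0 < a + 2*Real.sqrt ((μ+1)/μ) := by linarith
    nlinarith [mul_pos hμ (mul_pos h2s h2s')]
  have h21 : 2/a < 1 := by rw [div_lt_one ha0]; linarith
  have hta : a*(2/a) - 1 = 1 := by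
    rw [mul_comm, div_mul_cancel₀ 2 (ne_of_gt ha0)]
    norm_num
  -- psi is 0 at the left endpoint
  have hpsi0 : psiF μ a (2/a) = 0 := by
    rw [psiF, hta, one_pow, Real.log_one, mul_zero, sub_zero, sub_self]
  -- FF is negative at the left endpoint
  have h4 : (0:ℝ) < a^2 - 4 := by nlinarith
  have hv2a : (0:ℝ) < 1 - (2/a)^2 := by
    have : (2/a)^2 < 1 := by
      have h2a0 : 0 < 2/a := by positivity
      nlinarith
    linarith
  have hF0 : FF μ a (2/a) < 0 := by
    rw [FF, hta]
    have e : 2*(2/a)/((1:ℝ)^2-(2/a)^2) + 2*(2/a)*1/(1-(2/a)^2) = 8*a/(a^2-4) := by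
      have hh1 : (1:ℝ) - (2/a)^2 ≠ 0 := ne_of_gt hv2a
      have hh2 : a ≠ 0 := ne_of_gt ha0
      have hh3 : a^2 - 4 ≠ 0 := ne_of_gt h4
      rw [one_pow, ← add_div, div_eq_div_iff hh1 hh3]
      field_simp
      ring
    rw [e]
    rw [sub_neg]
    rw [div_lt_iff₀ h4]
    nlinarith
  -- find a point x₀ with psi < 0
  have hd := hasDerivAt_psiF (μ := μ) ha2 (le_refl (2/a)) h21
  rw [hta, div_one] at hd
  have htend : Tendsto (slope (psiF μ a) (2/a)) (𝓝[>] (2/a)) (𝓝 (FF μ a (2/a))) :=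
    (hasDerivAt_iff_tendsto_slope.mp hd).mono_left
      (nhdsWithin_mono _ (fun y hy => by simpa using (Set.mem_Ioi.mp hy).ne'))
  have hev1 : ∀ᶠ y in 𝓝[>] (2/a), slope (psiF μ a) (2/a) y < 0 :=
    htend.eventually_lt_const hF0
  have hev2 : Ioo (2/a) 1 ∈ 𝓝[>] (2/a) := Ioo_mem_nhdsGT_of_mem ⟨le_refl _, h21⟩
  obtain ⟨x₀, hsl, hx₀⟩ := (hev1.and (eventually_of_mem hev2 (fun y hy => hy))).exists
  have hpsix₀ : psiF μ a x₀ < 0 := by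
    rw [slope_def_field, hpsi0, sub_zero] at hsl
    have hd0 : 0 < x₀ - 2/a := by linarith [hx₀.1]
    by_contra hcon
    push_neg at hcon
    exact absurd hsl (not_lt.mpr (div_nonneg hcon hd0.le))
  -- w is negative at x₀
  have hwx₀ : wF μ a x₀ < 0 := by
    rw [wF_eq ha2 hx₀.1.le hx₀.2]
    have hV : 0 < 1 - x₀^2 := (basics ha2 hx₀.1.le hx₀.2).2.2.1
    have : Real.exp (psiF μ a x₀) < 1 := Real.exp_lt_one_iff.mpr hpsix₀
    nlinarith
  -- w is positive at 1
  have hw1 : 0 < wF μ a 1 := by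
    have e : wF μ a 1 = (a^2-2*a)/((a-1) ^ (2*μ+2)) := by
      rw [wF]
      rw [show a*1-1 = a-1 by ring, show (a^2-1)*1^2-2*a*1+1 = a^2-2*a by ring]
      norm_num
    rw [e]
    apply div_pos (by nlinarith)
    exact Real.rpow_pos_of_pos (by linarith) _
  -- continuity of w on [x₀, 1]
  have htpos : ∀ x ∈ Icc x₀ 1, 0 < a*x - 1 := by
    intro x hx
    have htx : 0 < a*x - 1 := by
      have h2ax : 2 < x₀*a := (div_lt_iff₀ ha0).mp hx₀.1
      nlinarith [hx.1, hx₀.1, hx₀.2]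
    exact htx
  have hlin : Continuous fun y : ℝ => a*y-1 := (continuous_const.mul continuous_id).sub continuous_const
  have hwcont : ContinuousOn (wF μ a) (Icc x₀ 1) := by
    unfold wF
    apply ContinuousOn.sub ?_ continuousOn_const
    apply ContinuousOn.add ?_ (continuous_pow 2).continuousOn
    apply ContinuousOn.div
    · exact ((continuous_const.mul (continuous_pow 2)).sub
        (continuous_const.mul continuous_id)).add continuous_const |>.continuousOn
    · intro x hx
      exact ContinuousAt.continuousWithinAt
        ((Real.continuousAt_rpow_const _ _ (Or.inr (by linarith))).comp hlin.continuousAt)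
    · intro x hx
      exact ne_of_gt (Real.rpow_pos_of_pos (htpos x hx) _)
  -- existence of a root by IVT
  obtain ⟨c, hcmem, hc⟩ := intermediate_value_Icc hx₀.2.le hwcont ⟨hwx₀.le, hw1.le⟩
  have hcIoc : c ∈ Set.Ioc (2/a) 1 := ⟨lt_of_lt_of_le hx₀.1 hcmem.1, hcmem.2⟩
  -- any root in Ioc is < 1
  have hroot_lt1 : ∀ y ∈ Set.Ioc (2/a) 1, wF μ a y = 0 → y < 1 := by
    intro y hy hwy
    rcases lt_or_eq_of_le hy.2 with h | h
    · exact h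
    · exfalso; rw [h] at hwy; rw [hwy] at hw1; exact lt_irrefl 0 hw1
  -- roots give psi = 0
  have hroot_psi : ∀ y ∈ Set.Ioc (2/a) 1, wF μ a y = 0 → psiF μ a y = 0 := by
    intro y hy hwy
    have hy1 := hroot_lt1 y hy hwy
    rw [wF_eq ha2 hy.1.le hy1] at hwy
    have hV : 0 < 1 - y^2 := (basics ha2 hy.1.le hy1).2.2.1
    have : Real.exp (psiF μ a y) - 1 = 0 := by
      rcases mul_eq_zero.mp hwy with h | h
      · exfalso; linarith
      · exact h
    have : Real.exp (psiF μ a y) = 1 := by linarith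
    exact Real.exp_injective (this.trans Real.exp_zero.symm)
  -- uniqueness: no two distinct roots
  have huniq : ∀ y z, y ∈ Set.Ioc (2/a) 1 → z ∈ Set.Ioc (2/a) 1 →
      wF μ a y = 0 → wF μ a z = 0 → y < z → False := by
    intro y z hy hz hwy hwz hyz
    have hy1 := hroot_lt1 y hy hwy
    have hz1 := hroot_lt1 z hz hwz
    have hpy := hroot_psi y hy hwy
    have hpz := hroot_psi z hz hwz
    -- Rolle on [2/a, y]
    obtain ⟨ξ₁, hξ₁, hdξ₁⟩ := exists_hasDerivAt_eq_zero hy.1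
      (fun x hx => (hasDerivAt_psiF ha2 hx.1 (lt_of_le_of_lt hx.2 hy1)).continuousAt.continuousWithinAt)
      (by rw [hpsi0, hpy])
      (fun x hx => hasDerivAt_psiF ha2 hx.1.le (lt_trans hx.2 hy1))
    -- Rolle on [y, z]
    obtain ⟨ξ₂, hξ₂, hdξ₂⟩ := exists_hasDerivAt_eq_zero hyz
      (fun x hx => (hasDerivAt_psiF ha2 (le_trans hy.1.le hx.1) (lt_of_le_of_lt hx.2 hz1)).continuousAt.continuousWithinAt)
      (by rw [hpy, hpz])
      (fun x hx => hasDerivAt_psiF ha2 (le_trans hy.1.le hx.1.le) (lt_trans hx.2 hz1))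
    have hξ₁t : a*ξ₁ - 1 ≠ 0 := by
      have h := (div_lt_iff₀ ha0).mp hξ₁.1
      rw [mul_comm] at h
      linarith
    have hξ₂t : a*ξ₂ - 1 ≠ 0 := by
      have h2 : 2/a < ξ₂ := lt_trans hy.1 hξ₂.1
      have h := (div_lt_iff₀ ha0).mp h2
      rw [mul_comm] at h
      linarith
    have hF₁ : FF μ a ξ₁ = 0 := by
      rcases div_eq_zero_iff.mp hdξ₁ with h | h
      · exact h
      · exact absurd h hξ₁t
    have hF₂ : FF μ a ξ₂ = 0 := by
      rcases div_eq_zero_iff.mp hdξ₂ with h | h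
      · exact h
      · exact absurd h hξ₂t
    have hm := FF_mono (μ := μ) ha2
      (Set.mem_Ico.mpr ⟨hξ₁.1.le, lt_trans hξ₁.2 hy1⟩)
      (Set.mem_Ico.mpr ⟨le_trans hy.1.le hξ₂.1.le, lt_trans hξ₂.2 hz1⟩)
      (lt_trans hξ₁.2 hξ₂.1)
    rw [hF₁, hF₂] at hm
    exact lt_irrefl 0 hm
  refine ⟨c, ⟨hcIoc, hc⟩, ?_⟩
  intro y hy
  have hyw : wF μ a y = 0 := hy.2
  rcases lt_trichotomy y c with h | h | h
  · exact absurd (huniq y c hy.1 hcIoc hyw hc h) (fun f => f)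
  · exact h
  · exact absurd (huniq c y hcIoc hy.1 hc hyw h) (fun f => f)
end

section
/- Let μ > 0, t̄ = √(μ/(μ+1)), and p(t) = (8μ²+4μ)t^{2μ+2} − (8μ²+20μ+12)t^{2μ+4}, t̃ = √((2μ²+μ)/(2μ²+7μ+6)). Then p(t̄) = −8 μ^{μ+2}/(μ+1)^{μ+1} and p(t̃) < |p(t̄)|; equivalently (μ+1)^{μ+1}(μ+½)^{μ+2} < (μ+3/2)^{μ+1}(μ+2)^{μ+2} holds for all μ > 0. -/
set_option maxHeartbeats 1000000 in
theorem stmt13 (μ : ℝ) (hμ : 0 < μ) (p : ℝ → ℝ)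
    (hp : ∀ t : ℝ, p t = (8*μ^2 + 4*μ) * t ^ (2*μ+2) - (8*μ^2 + 20*μ + 12) * t ^ (2*μ+4))
    (tbar ttil : ℝ)
    (htbar : tbar = Real.sqrt (μ/(μ+1)))
    (httil : ttil = Real.sqrt ((2*μ^2+μ)/(2*μ^2+7*μ+6))) :
    p tbar = -8 * μ ^ (μ+2) / (μ+1) ^ (μ+1) ∧
    p ttil < |p tbar| ∧
    (μ+1) ^ (μ+1) * (μ+1/2) ^ (μ+2) < (μ+3/2) ^ (μ+1) * (μ+2) ^ (μ+2) := by
  have h1 : (0:ℝ) < μ + 1 := by linarith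
  have hr : (0:ℝ) < μ / (μ+1) := div_pos hμ h1
  have hs : (0:ℝ) < (2*μ^2+μ)/(2*μ^2+7*μ+6) := by
    apply div_pos <;> nlinarith
  have key : ∀ x : ℝ, 0 < x → Real.sqrt x ^ (2*μ+2) = x ^ (μ+1) ∧
      Real.sqrt x ^ (2*μ+4) = x ^ (μ+1) * x := by
    intro x hx
    rw [Real.sqrt_eq_rpow, ← Real.rpow_mul hx.le, ← Real.rpow_mul hx.le]
    constructor
    · congr 1; ring
    · rw [show (1:ℝ)/2*(2*μ+4) = (μ+1)+1 by ring, Real.rpow_add_one hx.ne']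
  obtain ⟨e1, e2⟩ := key _ hr
  obtain ⟨f1, f2⟩ := key _ hs
  rw [← htbar] at e1 e2
  rw [← httil] at f1 f2
  set a := μ ^ (μ+1) with ha
  set b := (μ+1) ^ (μ+1) with hb
  set c := (μ+1/2) ^ (μ+1) with hc
  set d := (μ+3/2) ^ (μ+1) with hd
  set e := (μ+2) ^ (μ+1) with he
  set t := (2:ℝ) ^ (μ+1) with ht
  have hapos : (0:ℝ) < a := Real.rpow_pos_of_pos hμ _
  have hbpos : (0:ℝ) < b := Real.rpow_pos_of_pos h1 _
  have hcpos : (0:ℝ) < c := Real.rpow_pos_of_pos (by linarith) _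
  have hdpos : (0:ℝ) < d := Real.rpow_pos_of_pos (by linarith) _
  have hepos : (0:ℝ) < e := Real.rpow_pos_of_pos (by linarith) _
  have htpos : (0:ℝ) < t := Real.rpow_pos_of_pos (by norm_num) _
  have hdiv : (μ/(μ+1)) ^ (μ+1) = a / b := Real.div_rpow hμ.le h1.le _
  have hμ2 : μ ^ (μ+2) = a * μ := by
    rw [show μ+2 = (μ+1)+1 by ring, ha, Real.rpow_add_one hμ.ne']
  have hc2 : (μ+1/2) ^ (μ+2) = c * (μ+1/2) := by
    rw [show μ+2 = (μ+1)+1 by ring, hc, Real.rpow_add_one (by linarith : μ+1/2 ≠ 0)]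
  have he2 : (μ+2) ^ (μ+2) = e * (μ+2) := by
    rw [he, ← Real.rpow_add_one (show (μ:ℝ)+2 ≠ 0 by linarith)]
    congr 1
    ring
  -- part 1
  have part1 : p tbar = -8 * μ ^ (μ+2) / (μ+1) ^ (μ+1) := by
    rw [hp, e1, e2, hdiv, hμ2, ← hb]
    field_simp
    ring
  -- part 3
  have g1 : b < d := Real.rpow_lt_rpow (by linarith) (by linarith) (by linarith)
  have g2 : (μ+1/2) ^ (μ+2) < (μ+2) ^ (μ+2) :=
    Real.rpow_lt_rpow (by linarith) (by linarith) (by linarith)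
  have part3 : b * (μ+1/2) ^ (μ+2) < d * (μ+2) ^ (μ+2) :=
    mul_lt_mul'' g1 g2 hbpos.le (by positivity)
  refine ⟨part1, ?_, part3⟩
  -- part 2
  have hcore : b * (c * (μ+1/2)) < d * (e * (μ+2)) := by
    rw [← hc2, ← he2]; exact part3
  have m1 : (μ*(2*(μ+1/2))) ^ (μ+1) = a * (t * c) := by
    rw [Real.mul_rpow hμ.le (by linarith), Real.mul_rpow (by norm_num) (by linarith),
        ha, ht, hc]
  have m2 : (2*(μ+3/2)*(μ+2)) ^ (μ+1) = t * (d * e) := by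
    rw [Real.mul_rpow (by nlinarith) (by linarith),
        Real.mul_rpow (by norm_num) (by linarith), ht, hd, he]
    ring
  have hsplit : ((2*μ^2+μ)/(2*μ^2+7*μ+6)) ^ (μ+1) = (a * (t * c)) / (t * (d * e)) := by
    rw [show 2*μ^2+μ = μ*(2*(μ+1/2)) by ring,
        show 2*μ^2+7*μ+6 = 2*(μ+3/2)*(μ+2) by ring,
        Real.div_rpow (by nlinarith) (by nlinarith), m1, m2]
  have hptt : p ttil = (8*μ^2+4*μ - (8*μ^2+20*μ+12)*((2*μ^2+μ)/(2*μ^2+7*μ+6)))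
      * ((2*μ^2+μ)/(2*μ^2+7*μ+6)) ^ (μ+1) := by
    rw [hp, f1, f2]; ring
  have hd0 : (2*μ^2+7*μ+6) ≠ 0 := by nlinarith
  have hcoef : 8*μ^2+4*μ - (8*μ^2+20*μ+12)*((2*μ^2+μ)/(2*μ^2+7*μ+6))
      = 4*μ*(2*μ+1)/(μ+2) := by
    field_simp
    ring
  have habs : |p tbar| = 8 * (a*μ) / b := by
    rw [part1, hμ2, abs_div, abs_of_pos hbpos, abs_of_nonpos (by nlinarith : -8*(a*μ) ≤ 0)]
    ring
  rw [hptt, hcoef, hsplit, habs]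
  rw [div_mul_div_comm, div_lt_div_iff₀ (by positivity) hbpos]
  calc 4*μ*(2*μ+1) * (a*(t*c)) * b = (4*μ*t*a) * (b * (c * (μ+1/2)) * 2) := by ring
    _ < (4*μ*t*a) * (d * (e * (μ+2)) * 2) := by
        apply mul_lt_mul_of_pos_left _ (by positivity)
        linarith
    _ = 8*(a*μ) * ((μ+2)*(t*(d*e))) := by ring
end

section
/- Let μ > 0 and g(t) = t² f'(t) with f(t) = t^{2μ} − t^{2μ+2}, t̄ = √(μ/(μ+1)). If 0 < t₁ < t̄ < t₂ < 1 and f(t₁) = f(t₂), then g²(t₁) < g²(t₂). Consequently the system g(t₁) = −g(t₂), f(t₁) = f(t₂), 0 < t₁ < t̄ < t₂ < 1 has no solution. -/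
set_option maxHeartbeats 1000000


theorem stmt14 (μ : ℝ) (hμ : 0 < μ) (f g : ℝ → ℝ)
    (hf : ∀ t : ℝ, f t = t ^ (2*μ) - t ^ (2*μ+2))
    (hg : ∀ t : ℝ, g t = t^2 * deriv f t)
    (tbar : ℝ) (htbar : tbar = Real.sqrt (μ/(μ+1)))
    (t₁ t₂ : ℝ) (h1 : 0 < t₁) (h2 : t₁ < tbar) (h3 : tbar < t₂) (h4 : t₂ < 1)
    (heq : f t₁ = f t₂) :
    (g t₁)^2 < (g t₂)^2 ∧ g t₁ ≠ -g t₂ := by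
  have hμ1 : (0:ℝ) < μ + 1 := by linarith
  set sb : ℝ := μ / (μ + 1) with hsb
  have hsb0 : 0 < sb := div_pos hμ hμ1
  have htb0 : 0 < tbar := h1.trans h2
  have htb2 : tbar ^ 2 = sb := by rw [htbar]; exact Real.sq_sqrt (le_of_lt hsb0)
  have hsbmul : (μ + 1) * sb = μ := by rw [hsb]; field_simp
  set B : ℝ := sb ^ (μ + 1) with hB
  have hBpos : 0 < B := Real.rpow_pos_of_pos hsb0 _
  set K : ℝ := 8 * μ * B with hK
  -- derivative of f
  have hfe : f = fun x : ℝ => x ^ (2*μ) - x ^ (2*μ+2) := funext hf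
  have hfd : ∀ t : ℝ, 0 < t →
      HasDerivAt f (2*μ * t ^ (2*μ-1) - (2*μ+2) * t ^ (2*μ+1)) t := by
    intro t ht
    have hp1 : HasDerivAt (fun x : ℝ => x ^ (2*μ)) (2*μ * t ^ (2*μ-1)) t :=
      Real.hasDerivAt_rpow_const (Or.inl ht.ne')
    have hp2 : HasDerivAt (fun x : ℝ => x ^ (2*μ+2)) ((2*μ+2) * t ^ (2*μ+1)) t := by
      have h := Real.hasDerivAt_rpow_const (p := 2*μ+2) (Or.inl ht.ne')
      rwa [show 2*μ+2-1 = 2*μ+1 by ring] at h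
    rw [hfe]; exact hp1.sub hp2
  -- power identities
  have epow : ∀ t : ℝ, 0 < t → ∀ k : ℕ, t ^ (2*μ-1+(k:ℝ)) = t ^ (2*μ-1) * t ^ k := by
    intro t ht k
    rw [Real.rpow_add ht, Real.rpow_natCast]
  have e1 : ∀ t : ℝ, 0 < t → t ^ (2*μ) = t ^ (2*μ-1) * t ^ (1:ℕ) := by
    intro t ht
    rw [← epow t ht 1]; congr 1; push_cast; ring
  have e2 : ∀ t : ℝ, 0 < t → t ^ (2*μ+1) = t ^ (2*μ-1) * t ^ (2:ℕ) := by
    intro t ht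
    rw [← epow t ht 2]; congr 1; push_cast; ring
  have e3 : ∀ t : ℝ, 0 < t → t ^ (2*μ+2) = t ^ (2*μ-1) * t ^ (3:ℕ) := by
    intro t ht
    rw [← epow t ht 3]; congr 1; push_cast; ring
  have e4 : ∀ t : ℝ, 0 < t → t ^ (2*μ+3) = t ^ (2*μ-1) * t ^ (4:ℕ) := by
    intro t ht
    rw [← epow t ht 4]; congr 1; push_cast; ring
  have e5 : ∀ t : ℝ, 0 < t → (t ^ (2:ℕ)) ^ (μ+1) = t ^ (2*μ-1) * t ^ (3:ℕ) := by
    intro t ht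
    rw [← e3 t ht, ← Real.rpow_natCast t 2, ← Real.rpow_mul ht.le]
    norm_num; ring_nf
  -- explicit form of g
  have hgexp : ∀ t : ℝ, 0 < t → g t = 2*μ * t ^ (2*μ+1) - (2*μ+2) * t ^ (2*μ+3) := by
    intro t ht
    rw [hg t, (hfd t ht).deriv, e2 t ht, e4 t ht]
    ring
  -- the auxiliary function Ψ
  set Ψ : ℝ → ℝ := fun t =>
    (2*μ * t ^ (2*μ+1) - (2*μ+2) * t ^ (2*μ+3))^2 + K * (t ^ (2*μ) - t ^ (2*μ+2)) with hΨ
  set D : ℝ → ℝ := fun t =>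
    2 * (2*μ * t ^ (2*μ+1) - (2*μ+2) * t ^ (2*μ+3)) *
      (2*μ*((2*μ+1) * t ^ (2*μ)) - (2*μ+2)*((2*μ+3) * t ^ (2*μ+2)))
    + K * (2*μ * t ^ (2*μ-1) - (2*μ+2) * t ^ (2*μ+1)) with hD
  have hΨd : ∀ t : ℝ, 0 < t → HasDerivAt Ψ (D t) t := by
    intro t ht
    have p1 : HasDerivAt (fun x : ℝ => x ^ (2*μ+1)) ((2*μ+1) * t ^ (2*μ)) t := by
      have h := Real.hasDerivAt_rpow_const (p := 2*μ+1) (Or.inl ht.ne')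
      rwa [show 2*μ+1-1 = 2*μ by ring] at h
    have p3 : HasDerivAt (fun x : ℝ => x ^ (2*μ+3)) ((2*μ+3) * t ^ (2*μ+2)) t := by
      have h := Real.hasDerivAt_rpow_const (p := 2*μ+3) (Or.inl ht.ne')
      rwa [show 2*μ+3-1 = 2*μ+2 by ring] at h
    have p0 : HasDerivAt (fun x : ℝ => x ^ (2*μ)) (2*μ * t ^ (2*μ-1)) t :=
      Real.hasDerivAt_rpow_const (Or.inl ht.ne')
    have p2 : HasDerivAt (fun x : ℝ => x ^ (2*μ+2)) ((2*μ+2) * t ^ (2*μ+1)) t := by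
      have h := Real.hasDerivAt_rpow_const (p := 2*μ+2) (Or.inl ht.ne')
      rwa [show 2*μ+2-1 = 2*μ+1 by ring] at h
    have hA : HasDerivAt (fun x : ℝ => 2*μ * x ^ (2*μ+1) - (2*μ+2) * x ^ (2*μ+3))
        (2*μ*((2*μ+1) * t ^ (2*μ)) - (2*μ+2)*((2*μ+3) * t ^ (2*μ+2))) t :=
      (p1.const_mul (2*μ)).sub (p3.const_mul (2*μ+2))
    have hBd : HasDerivAt (fun x : ℝ => x ^ (2*μ) - x ^ (2*μ+2))
        (2*μ * t ^ (2*μ-1) - (2*μ+2) * t ^ (2*μ+1)) t := p0.sub p2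
    have htot := (hA.pow 2).add (hBd.const_mul K)
    have : HasDerivAt Ψ
        ((2:ℕ) * (2*μ * t ^ (2*μ+1) - (2*μ+2) * t ^ (2*μ+3)) ^ (2-1) *
          (2*μ*((2*μ+1) * t ^ (2*μ)) - (2*μ+2)*((2*μ+3) * t ^ (2*μ+2)))
         + K * (2*μ * t ^ (2*μ-1) - (2*μ+2) * t ^ (2*μ+1))) t := htot
    convert this using 1
    rw [hD]; push_cast; ring
  have hDpos : ∀ x : ℝ, 0 < x → x ≠ tbar → 0 < D x := by
    intro x hx hne
    have hXpos : 0 < x ^ (2*μ-1) := Real.rpow_pos_of_pos hx _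
    have key : D x = 2 * (x ^ (2*μ-1)) * (μ - (μ+1)*x^2) *
        (4*((x ^ (2*μ-1)) * x^3)*(μ*(2*μ+1) - (μ+1)*(2*μ+3)*x^2) + K) := by
      simp only [hD]
      rw [e1 x hx, e2 x hx, e3 x hx, e4 x hx]
      ring
    rw [key]
    have hy0 : (0:ℝ) < x^2 := by positivity
    have hApos : 0 < x ^ (2*μ-1) * x^3 := by positivity
    rcases hne.lt_or_gt with hlt | hgt
    · -- x < tbar
      have hylt : x^2 < sb := by
        rw [← htb2]; nlinarith
      have hAB : x ^ (2*μ-1) * x^3 < B := by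
        rw [← e5 x hx, hB]
        exact Real.rpow_lt_rpow hy0.le hylt hμ1
      have hu : 0 < μ - (μ+1)*x^2 := by nlinarith
      have hR : 0 < 4*((x ^ (2*μ-1)) * x^3)*(μ*(2*μ+1) - (μ+1)*(2*μ+3)*x^2) + K := by
        rw [hK]
        nlinarith [mul_pos hApos (show 0 < 2*μ - ((μ+1)*(2*μ+3)*x^2 - μ*(2*μ+1)) by nlinarith),
          mul_pos hμ (sub_pos.mpr hAB)]
      nlinarith [mul_pos (mul_pos hXpos hu) hR]
    · -- tbar < x
      have hygt : sb < x^2 := by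
        rw [← htb2]; nlinarith
      have hAB : B < x ^ (2*μ-1) * x^3 := by
        rw [← e5 x hx, hB]
        exact Real.rpow_lt_rpow hsb0.le hygt hμ1
      have hu : μ - (μ+1)*x^2 < 0 := by nlinarith
      have hR : 4*((x ^ (2*μ-1)) * x^3)*(μ*(2*μ+1) - (μ+1)*(2*μ+3)*x^2) + K < 0 := by
        rw [hK]
        nlinarith [mul_pos hApos (show 0 < ((μ+1)*(2*μ+3)*x^2 - μ*(2*μ+1)) - 2*μ by nlinarith),
          mul_pos hμ (sub_pos.mpr hAB)]
      nlinarith [mul_pos_of_neg_of_neg hu hR, hXpos, mul_pos hXpos (mul_pos_of_neg_of_neg hu hR)]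
  -- strict monotonicity
  have mono1 : StrictMonoOn Ψ (Set.Icc t₁ tbar) := by
    apply strictMonoOn_of_deriv_pos (convex_Icc _ _)
    · intro x hx
      exact ((hΨd x (lt_of_lt_of_le h1 hx.1)).continuousAt).continuousWithinAt
    · intro x hx
      rw [interior_Icc] at hx
      rw [(hΨd x (h1.trans hx.1)).deriv]
      exact hDpos x (h1.trans hx.1) (ne_of_lt hx.2)
  have mono2 : StrictMonoOn Ψ (Set.Icc tbar t₂) := by
    apply strictMonoOn_of_deriv_pos (convex_Icc _ _)
    · intro x hx
      exact ((hΨd x (lt_of_lt_of_le htb0 hx.1)).continuousAt).continuousWithinAt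
    · intro x hx
      rw [interior_Icc] at hx
      rw [(hΨd x (htb0.trans hx.1)).deriv]
      exact hDpos x (htb0.trans hx.1) (ne_of_gt hx.1)
  have lt1 : Ψ t₁ < Ψ tbar :=
    mono1 (Set.mem_Icc.mpr ⟨le_refl _, h2.le⟩) (Set.mem_Icc.mpr ⟨h2.le, le_refl _⟩) h2
  have lt2 : Ψ tbar < Ψ t₂ :=
    mono2 (Set.mem_Icc.mpr ⟨le_refl _, h3.le⟩) (Set.mem_Icc.mpr ⟨h3.le, le_refl _⟩) h3
  have q1 : (g t₁)^2 + K * f t₁ = Ψ t₁ := by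
    rw [hgexp t₁ h1, hf t₁]
  have q2 : (g t₂)^2 + K * f t₂ = Ψ t₂ := by
    rw [hgexp t₂ (htb0.trans h3), hf t₂]
  have hmain : (g t₁)^2 < (g t₂)^2 := by
    have := lt1.trans lt2
    rw [← q1, ← q2, heq] at this
    linarith
  refine ⟨hmain, ?_⟩
  intro hcon
  have : (g t₁)^2 = (g t₂)^2 := by rw [hcon]; ring
  linarith
end

section
/- Let μ > 0, t̄ = √(μ/(μ+1)). The function (t₁,t₂) ↦ t₁⁻¹ + t₂⁻¹ restricted to the curve T₂ = { (t₁,t₂) : 0 < t₁ < t̄ < t₂ < 1, f(t₁) = f(t₂) } (with f(t) = t^{2μ} − t^{2μ+2}) has infimum 2√((μ+1)/μ), attained only in the limit t₁ = t₂ = t̄; in particular t₁⁻¹ + t₂⁻¹ > 2√((μ+1)/μ) on T₂. -/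
open Real Set

lemma aux_contF (μ : ℝ) :
    ContinuousOn (fun t : ℝ => t ^ (2*μ) - t ^ (2*μ+2)) (Set.Ioi 0) := by
  intro t ht
  have h1 : ContinuousAt (fun t : ℝ => t ^ (2*μ)) t :=
    Real.continuousAt_rpow_const t _ (Or.inl (ne_of_gt ht))
  have h2 : ContinuousAt (fun t : ℝ => t ^ (2*μ+2)) t :=
    Real.continuousAt_rpow_const t _ (Or.inl (ne_of_gt ht))
  exact (h1.sub h2).continuousWithinAt

lemma aux_expF (μ t : ℝ) (ht : 0 < t) (ht1 : t < 1) :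
    t ^ (2*μ) - t ^ (2*μ+2) = Real.exp (2*μ * Real.log t + Real.log (1 - t^2)) := by
  have hpos : (0:ℝ) < 1 - t^2 := by nlinarith
  have h2 : t ^ (2*μ+2) = t ^ (2*μ) * t^2 := by
    rw [Real.rpow_add ht, Real.rpow_two]
  rw [h2, Real.rpow_def_of_pos ht, Real.exp_add, Real.exp_log hpos, mul_comm (Real.log t)]
  ring

lemma aux_phi_deriv (μ x : ℝ) (hx : 0 < x) (hx1 : x < 1) :
    HasDerivAt (fun t : ℝ => 2*μ * Real.log t + Real.log (1 - t^2))
      (2*μ * x⁻¹ + (-(2*x^1))/(1 - x^2)) x := by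
  have hne : (1:ℝ) - x^2 ≠ 0 := by nlinarith
  have h1 : HasDerivAt (fun t : ℝ => 2*μ * Real.log t) (2*μ * x⁻¹) x :=
    (Real.hasDerivAt_log hx.ne').const_mul (2*μ)
  have h2 : HasDerivAt (fun t : ℝ => 1 - t^2) (-(2*x^1)) x := by
    have := (hasDerivAt_pow 2 x).const_sub 1
    simpa using this
  exact h1.add (h2.log hne)

lemma aux_F_mono (μ tbar : ℝ) (hμ : 0 < μ) (htb : tbar = Real.sqrt (μ/(μ+1))) :
    StrictMonoOn (fun t : ℝ => t ^ (2*μ) - t ^ (2*μ+2)) (Set.Ioc 0 tbar) := by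
  have hμ1 : (0:ℝ) < μ + 1 := by linarith
  have htb2 : (μ+1) * tbar^2 = μ := by
    rw [htb, Real.sq_sqrt (le_of_lt (div_pos hμ hμ1))]; field_simp
  have htbpos : 0 < tbar := by rw [htb]; positivity
  have htb1 : tbar < 1 := by nlinarith [sq_nonneg (tbar - 1)]
  have hmono : StrictMonoOn (fun t : ℝ => 2*μ * Real.log t + Real.log (1 - t^2))
      (Set.Ioc 0 tbar) := by
    apply strictMonoOn_of_deriv_pos (convex_Ioc 0 tbar)
    · intro x hx
      have hx0 : 0 < x := hx.1
      have hx1 : x < 1 := lt_of_le_of_lt hx.2 htb1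
      exact (aux_phi_deriv μ x hx0 hx1).continuousAt.continuousWithinAt
    · intro x hx
      rw [interior_Ioc] at hx
      have hx0 : 0 < x := hx.1
      have hx1 : x < 1 := lt_trans hx.2 htb1
      rw [(aux_phi_deriv μ x hx0 hx1).deriv]
      have h1 : (0:ℝ) < 1 - x^2 := by nlinarith
      have heq : 2*μ * x⁻¹ + (-(2*x^1))/(1 - x^2)
          = (2*μ*(1 - x^2) - 2*x^2) / (x*(1 - x^2)) := by
        field_simp
        ring
      rw [heq]
      apply div_pos _ (by positivity)
      nlinarith [mul_lt_mul_of_pos_left (mul_self_lt_mul_self (le_of_lt hx0) hx.2) hμ1,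
        sq_nonneg x]
  intro x hx y hy hxy
  have hx1 : x < 1 := lt_of_le_of_lt hx.2 htb1
  have hy1 : y < 1 := lt_of_le_of_lt hy.2 htb1
  simp only
  rw [aux_expF μ x hx.1 hx1, aux_expF μ y hy.1 hy1]
  exact Real.exp_lt_exp.mpr (hmono hx hy hxy)

lemma aux_F_anti (μ tbar : ℝ) (hμ : 0 < μ) (htb : tbar = Real.sqrt (μ/(μ+1))) :
    StrictAntiOn (fun t : ℝ => t ^ (2*μ) - t ^ (2*μ+2)) (Set.Ico tbar 1) := by
  have hμ1 : (0:ℝ) < μ + 1 := by linarith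
  have htb2 : (μ+1) * tbar^2 = μ := by
    rw [htb, Real.sq_sqrt (le_of_lt (div_pos hμ hμ1))]; field_simp
  have htbpos : 0 < tbar := by rw [htb]; positivity
  have hanti : StrictAntiOn (fun t : ℝ => 2*μ * Real.log t + Real.log (1 - t^2))
      (Set.Ico tbar 1) := by
    apply strictAntiOn_of_deriv_neg (convex_Ico tbar 1)
    · intro x hx
      have hx0 : 0 < x := lt_of_lt_of_le htbpos hx.1
      exact (aux_phi_deriv μ x hx0 hx.2).continuousAt.continuousWithinAt
    · intro x hx
      rw [interior_Ico] at hx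
      have hx0 : 0 < x := lt_trans htbpos hx.1
      have hx1 : x < 1 := hx.2
      rw [(aux_phi_deriv μ x hx0 hx1).deriv]
      have h1 : (0:ℝ) < 1 - x^2 := by nlinarith
      have heq : 2*μ * x⁻¹ + (-(2*x^1))/(1 - x^2)
          = (2*μ*(1 - x^2) - 2*x^2) / (x*(1 - x^2)) := by
        field_simp
        ring
      rw [heq]
      apply div_neg_of_neg_of_pos _ (by positivity)
      nlinarith [mul_lt_mul_of_pos_left (mul_self_lt_mul_self (le_of_lt htbpos) hx.1) hμ1,
        sq_nonneg x]
  intro x hx y hy hxy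
  have hx0 : 0 < x := lt_of_lt_of_le htbpos hx.1
  have hy0 : 0 < y := lt_of_lt_of_le htbpos hy.1
  simp only
  rw [aux_expF μ x hx0 hx.2, aux_expF μ y hy0 hy.2]
  exact Real.exp_lt_exp.mpr (hanti hx hy hxy)

lemma aux_expPsi (μ s : ℝ) (hs : 1 < s) :
    (1/s) ^ (2*μ) - (1/s) ^ (2*μ+2)
      = Real.exp (Real.log (s^2 - 1) - (2*μ+2) * Real.log s) := by
  have hs0 : 0 < s := by linarith
  have ht : 0 < 1/s := by positivity
  have ht1 : 1/s < 1 := by rw [div_lt_one hs0]; exact hs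
  rw [aux_expF μ (1/s) ht ht1]
  congr 1
  have hlog : Real.log (1/s) = -Real.log s := by rw [one_div, Real.log_inv]
  have h1 : 1 - (1/s)^2 = (s^2-1)/s^2 := by field_simp
  rw [hlog, h1, Real.log_div (by nlinarith) (by positivity), Real.log_pow]
  push_cast
  ring

lemma aux_D_deriv (μ s v : ℝ) (ha1 : 1 < s + v) (hb1 : 1 < s - v) :
    HasDerivAt (fun u : ℝ => (Real.log ((s+u)^2-1) - (2*μ+2)*Real.log (s+u))
      - (Real.log ((s-u)^2-1) - (2*μ+2)*Real.log (s-u)))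
      ((2*(s+v)/((s+v)^2-1) - (2*μ+2)/(s+v))
        + (2*(s-v)/((s-v)^2-1) - (2*μ+2)/(s-v))) v := by
  have ha0 : 0 < s + v := by linarith
  have hb0 : 0 < s - v := by linarith
  have ha2 : (s+v)^2 - 1 ≠ 0 := by nlinarith
  have hb2 : (s-v)^2 - 1 ≠ 0 := by nlinarith
  have hA : HasDerivAt (fun u : ℝ => s + u) 1 v := by
    simpa using (hasDerivAt_id v).const_add s
  have hB : HasDerivAt (fun u : ℝ => s - u) (-1) v := by
    simpa using (hasDerivAt_id v).const_sub s
  have hA2 : HasDerivAt (fun u : ℝ => (s+u)^2 - 1) ((2:ℕ) * (s+v)^1 * 1) v :=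
    (hA.pow 2).sub_const 1
  have hB2 : HasDerivAt (fun u : ℝ => (s-u)^2 - 1) ((2:ℕ) * (s-v)^1 * (-1)) v :=
    (hB.pow 2).sub_const 1
  have hA2l := hA2.log ha2
  have hB2l := hB2.log hb2
  have hAl := hA.log ha0.ne'
  have hBl := hB.log hb0.ne'
  have := (hA2l.sub (hAl.const_mul (2*μ+2))).sub (hB2l.sub (hBl.const_mul (2*μ+2)))
  refine this.congr_deriv ?_
  field_simp
  ring

lemma aux_key (μ s u : ℝ) (hμ : 0 < μ) (hrel : μ * s^2 = μ+1) (hs : 1 < s)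
    (hu : 0 < u) (hu2 : u < s - 1) :
    Real.log ((s-u)^2-1) - (2*μ+2)*Real.log (s-u)
      < Real.log ((s+u)^2-1) - (2*μ+2)*Real.log (s+u) := by
  set D : ℝ → ℝ := fun u => (Real.log ((s+u)^2-1) - (2*μ+2)*Real.log (s+u))
      - (Real.log ((s-u)^2-1) - (2*μ+2)*Real.log (s-u)) with hD
  have hmono : StrictMonoOn D (Set.Ico 0 (s-1)) := by
    apply strictMonoOn_of_deriv_pos (convex_Ico 0 (s-1))
    · intro v hv
      have ha1 : 1 < s + v := by cases hv with | intro h1 h2 => linarith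
      have hb1 : 1 < s - v := by cases hv with | intro h1 h2 => linarith
      exact (aux_D_deriv μ s v ha1 hb1).continuousAt.continuousWithinAt
    · intro v hv
      rw [interior_Ico] at hv
      obtain ⟨hv0, hv1⟩ := hv
      have ha1 : 1 < s + v := by linarith
      have hb1 : 1 < s - v := by linarith
      have ha0 : 0 < s + v := by linarith
      have hb0 : 0 < s - v := by linarith
      have ha2 : 0 < (s+v)^2 - 1 := by nlinarith
      have hb2 : 0 < (s-v)^2 - 1 := by nlinarith
      rw [(aux_D_deriv μ s v ha1 hb1).deriv]
      have h1 : (s-v)*((s-v)-1) < (s+v)*((s+v)-1) := by nlinarith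
      have h2 : ((s+v)+s)*((s-v)+1) < ((s-v)+s)*((s+v)+1) := by nlinarith
      have hkey : ((s+v)+s)*((s-v)*((s-v)^2-1)) < ((s-v)+s)*((s+v)*((s+v)^2-1)) := by
        nlinarith [mul_lt_mul'' h2 h1 (by nlinarith) (by nlinarith)]
      have hP : 0 < 2*(s+v)^2*(s-v)*((s-v)^2-1) + 2*(s+v)*(s-v)^2*((s+v)^2-1)
          - (2*μ+2)*((s+v)+(s-v))*((s+v)^2-1)*((s-v)^2-1) := by
        have h3 : 0 < 2*μ*v*((((s-v)+s)*((s+v)*((s+v)^2-1)))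
            - (((s+v)+s)*((s-v)*((s-v)^2-1)))) :=
          mul_pos (by positivity) (sub_pos.mpr hkey)
        have hid : 2*(s+v)^2*(s-v)*((s-v)^2-1) + 2*(s+v)*(s-v)^2*((s+v)^2-1)
            - (2*μ+2)*((s+v)+(s-v))*((s+v)^2-1)*((s-v)^2-1)
            = 2*μ*v*((((s-v)+s)*((s+v)*((s+v)^2-1)))
              - (((s+v)+s)*((s-v)*((s-v)^2-1)))) := by
          linear_combination (-4*s^3 - 12*s*v^2 + 4*s) * hrel
        linarith [h3, hid.ge, hid.le]
      have heq : (2*(s+v)/((s+v)^2-1) - (2*μ+2)/(s+v))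
          + (2*(s-v)/((s-v)^2-1) - (2*μ+2)/(s-v))
          = (2*(s+v)^2*(s-v)*((s-v)^2-1) + 2*(s+v)*(s-v)^2*((s+v)^2-1)
            - (2*μ+2)*((s+v)+(s-v))*((s+v)^2-1)*((s-v)^2-1))
            / ((s+v)*(s-v)*((s+v)^2-1)*((s-v)^2-1)) := by
        field_simp
        ring
      rw [heq]
      exact div_pos hP (by positivity)
  have h0 : D 0 < D u := by
    apply hmono (by constructor <;> linarith) (by constructor <;> linarith) hu
  have hD0 : D 0 = 0 := by simp [hD]
  have := hD0 ▸ h0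
  simpa [hD] using this

set_option maxHeartbeats 1600000 in
theorem stmt15 (μ : ℝ) (hμ : 0 < μ) (f : ℝ → ℝ)
    (hf : ∀ t : ℝ, f t = t ^ (2*μ) - t ^ (2*μ+2))
    (tbar : ℝ) (htbar : tbar = Real.sqrt (μ/(μ+1)))
    (S : Set ℝ)
    (hS : S = {x : ℝ | ∃ t₁ t₂ : ℝ, 0 < t₁ ∧ t₁ < tbar ∧ tbar < t₂ ∧ t₂ < 1 ∧
        f t₁ = f t₂ ∧ x = 1/t₁ + 1/t₂}) :
    IsGLB S (2 * Real.sqrt ((μ+1)/μ)) ∧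
    ∀ x ∈ S, 2 * Real.sqrt ((μ+1)/μ) < x := by
  subst hS
  have hmonoF := aux_F_mono μ tbar hμ htbar
  have hantiF := aux_F_anti μ tbar hμ htbar
  have hcontF := aux_contF μ
  set F : ℝ → ℝ := fun t => t ^ (2*μ) - t ^ (2*μ+2) with hF
  clear_value F
  set s : ℝ := Real.sqrt ((μ+1)/μ) with hsdef
  have hμ1 : (0:ℝ) < μ+1 := by linarith
  have hs2 : s^2 = (μ+1)/μ := by rw [hsdef]; exact Real.sq_sqrt (by positivity)
  clear_value s
  have hrel : μ * s^2 = μ+1 := by rw [hs2]; field_simp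
  have hgt1 : 1 < (μ+1)/μ := by rw [lt_div_iff₀ hμ]; linarith
  have hs1 : 1 < s := by nlinarith [Real.sqrt_nonneg ((μ+1)/μ), hs2, hgt1]
  have hts : tbar * s = 1 := by
    rw [htbar, hsdef, ← Real.sqrt_mul (by positivity)]
    rw [show μ/(μ+1) * ((μ+1)/μ) = 1 by field_simp]
    exact Real.sqrt_one
  have htb_pos : 0 < tbar := by nlinarith
  have htb1 : tbar < 1 := by nlinarith
  have htbs : 1/tbar = s := by field_simp at hts ⊢; linarith
  -- strict lower bound
  have hlb : ∀ x ∈ {x : ℝ | ∃ t₁ t₂ : ℝ, 0 < t₁ ∧ t₁ < tbar ∧ tbar < t₂ ∧ t₂ < 1 ∧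
      f t₁ = f t₂ ∧ x = 1/t₁ + 1/t₂}, 2*s < x := by
    rintro x ⟨t₁, t₂, ht₁0, ht₁, ht₂, ht₂1, heq, hx⟩
    by_contra hcon
    push_neg at hcon
    have ht₂0 : 0 < t₂ := lt_trans htb_pos ht₂
    have hs₂1 : 1 < 1/t₂ := by rw [lt_div_iff₀ ht₂0]; linarith
    have hs₂s : 1/t₂ < s := by rw [div_lt_iff₀ ht₂0]; nlinarith
    set u := s - 1/t₂ with hu
    clear_value u
    have hu0 : 0 < u := by rw [hu]; linarith
    have hu2 : u < s - 1 := by rw [hu]; linarith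
    have hsu : s - u = 1/t₂ := by rw [hu]; ring
    have hsu0 : 0 < s + u := by linarith
    have h1t₁ : 1/t₁ ≤ s + u := by
      have hx' : 1/t₁ = x - 1/t₂ := by rw [hx]; ring
      rw [hx', ← hsu]; linarith
    have ht₁' : 1/(s+u) ≤ t₁ := by
      rw [div_le_iff₀ hsu0]
      have h := mul_le_mul_of_nonneg_left h1t₁ (le_of_lt ht₁0)
      rw [mul_one_div, div_self ht₁0.ne'] at h
      linarith
    have hkey := aux_key μ s u hμ hrel hs1 hu0 hu2
    have hcmp : F (1/(s-u)) < F (1/(s+u)) := by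
      rw [hF]
      simp only
      rw [aux_expPsi μ (s-u) (by linarith), aux_expPsi μ (s+u) (by linarith)]
      exact Real.exp_lt_exp.mpr hkey
    have h2 : 1/(s-u) = t₂ := by rw [hsu, one_div_one_div]
    have hmem1 : 1/(s+u) ∈ Set.Ioc 0 tbar := by
      constructor
      · positivity
      · rw [div_le_iff₀ hsu0]; nlinarith
    have hmem2 : t₁ ∈ Set.Ioc 0 tbar := ⟨ht₁0, le_of_lt ht₁⟩
    have hle : F (1/(s+u)) ≤ F t₁ := hmonoF.monotoneOn hmem1 hmem2 ht₁'
    have hFeq : F t₁ = F t₂ := by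
      have := heq
      rw [hf t₁, hf t₂] at this
      simpa [hF] using this
    rw [h2] at hcmp
    exact (lt_of_lt_of_le hcmp hle).ne' hFeq
  -- existence of small elements
  have hex : ∀ w, 2*s < w → ∃ x ∈ {x : ℝ | ∃ t₁ t₂ : ℝ, 0 < t₁ ∧ t₁ < tbar ∧ tbar < t₂ ∧
      t₂ < 1 ∧ f t₁ = f t₂ ∧ x = 1/t₁ + 1/t₂}, x < w := by
    intro w hw
    set ε := min 1 (w - 2*s) with hε
    clear_value ε
    have hε0 : 0 < ε := by rw [hε]; exact lt_min one_pos (by linarith)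
    have hε1 : ε ≤ 1 := by rw [hε]; exact min_le_left _ _
    have hεw : ε ≤ w - 2*s := by rw [hε]; exact min_le_right _ _
    set δ := ε * tbar^2 / 8 with hδ
    clear_value δ
    have hδ0 : 0 < δ := by rw [hδ]; positivity
    have hδtb : δ < tbar := by rw [hδ]; nlinarith
    set p := tbar - δ with hp
    clear_value p
    have hp0 : 0 < p := by rw [hp]; linarith
    have hp1 : p < tbar := by rw [hp]; linarith
    have het : 0 < ε * tbar := mul_pos hε0 htb_pos
    have hetle : ε * tbar ≤ 1 := by nlinarith
    have hkey1 : 1 < p * (s + ε) := by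
      rw [hp, hδ]
      have e1 : (tbar - ε*tbar^2/8) * (s + ε)
          = (tbar*s) + ε*tbar - (ε*tbar)*(tbar*s)/8 - (ε*tbar)^2/8 := by ring
      rw [e1, hts]
      nlinarith [het, hetle]
    have h1p : 1/p < s + ε := by rw [div_lt_iff₀ hp0]; linarith
    set c := (tbar+1)/2 with hc
    clear_value c
    have hc1 : tbar < c := by rw [hc]; linarith
    have hc2 : c < 1 := by rw [hc]; linarith
    have hFp : F p < F tbar := hmonoF ⟨hp0, hp1.le⟩ ⟨htb_pos, le_refl _⟩ hp1
    have hFc : F c < F tbar := hantiF ⟨le_refl _, htb1⟩ ⟨hc1.le, hc2⟩ hc1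
    set v := (max (F p) (F c) + F tbar)/2 with hv
    clear_value v
    have hmax : max (F p) (F c) < F tbar := max_lt hFp hFc
    have hv2 : v < F tbar := by rw [hv]; linarith
    have hvp : F p < v := by rw [hv]; have := le_max_left (F p) (F c); linarith
    have hvc : F c < v := by rw [hv]; have := le_max_right (F p) (F c); linarith
    have hcont1 : ContinuousOn F (Set.Icc p tbar) := by
      apply hcontF.mono
      intro y hy
      exact lt_of_lt_of_le hp0 hy.1
    have hcont2 : ContinuousOn F (Set.Icc tbar c) := by
      apply hcontF.mono
      intro y hy
      exact lt_of_lt_of_le htb_pos hy.1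
    obtain ⟨t₁, ht₁mem, ht₁v⟩ := intermediate_value_Ioo hp1.le hcont1 ⟨hvp, hv2⟩
    obtain ⟨t₂, ht₂mem, ht₂v⟩ := intermediate_value_Ioo' hc1.le hcont2 ⟨hvc, hv2⟩
    have ht₁0 : 0 < t₁ := lt_trans hp0 ht₁mem.1
    have ht₂0 : 0 < t₂ := lt_trans htb_pos ht₂mem.1
    refine ⟨1/t₁ + 1/t₂, ⟨t₁, t₂, ht₁0, ht₁mem.2, ht₂mem.1, lt_trans ht₂mem.2 hc2, ?_, rfl⟩, ?_⟩
    · rw [hf t₁, hf t₂]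
      have : F t₁ = F t₂ := ht₁v.trans ht₂v.symm
      simpa [hF] using this
    · have hb1 : 1/t₁ < 1/p := one_div_lt_one_div_of_lt hp0 ht₁mem.1
      have hb2 : 1/t₂ < 1/tbar := one_div_lt_one_div_of_lt htb_pos ht₂mem.1
      rw [htbs] at hb2
      linarith
  refine ⟨⟨fun x hx => (hlb x hx).le, ?_⟩, hlb⟩
  intro y hy
  by_contra hy2
  push_neg at hy2
  obtain ⟨x, hxS, hxw⟩ := hex y hy2
  exact absurd (hy hxS) (not_le.mpr hxw)
end

section
/- Let μ > 0, γ > 0 and, for ω > ω₀ = 4/γ², define for ω ∈ (ω₀, ω*] (with ω* = 4(μ+1)/(γ²μ)) the function r(ω) = ((2−μ)/(2μ)) ∫_{2/(γ√ω)}^{1} (1−t²)^{1/μ−1} dt + (γ√ω)⁻¹ (1 − 4/(γ²ω))^{1/μ−1}. Then r'(ω) = −(γω^{3/2})⁻¹ (1 − 1/μ)(1 − 4/(γ²ω))^{1/μ−2}, so r is strictly decreasing on (ω₀, ω*] whenever μ > 1. -/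
open Set intervalIntegral MeasureTheory


lemma integ_aux {p a : ℝ} (hp : -1 < p) (ha : 0 ≤ a) (ha1 : a ≤ 1) :
    IntervalIntegrable (fun t : ℝ => (1-t^2) ^ p) volume a 1 := by
  rw [intervalIntegrable_iff_integrableOn_Ioc_of_le ha1]
  have hbound : IntegrableOn (fun t : ℝ => (2^p+1) * (1-t) ^ p) (Ioc a 1) volume := by
    have h1 : IntervalIntegrable (fun x : ℝ => x ^ p) volume 0 (1-a) :=
      intervalIntegral.intervalIntegrable_rpow' hp
    have h2 := (h1.comp_sub_left 1).symm
    simp only [sub_zero, sub_sub_cancel] at h2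
    have := h2.const_mul (2^p+1)
    rw [intervalIntegrable_iff_integrableOn_Ioc_of_le ha1] at this
    exact this
  apply hbound.integrable.mono'
  · exact ((by fun_prop : Measurable fun t : ℝ => (1-t^2) ^ p)).aestronglyMeasurable
  · filter_upwards [ae_restrict_mem measurableSet_Ioc] with t ht
    have ht0 : 0 < t := lt_of_le_of_lt ha ht.1
    have ht1 : t ≤ 1 := ht.2
    have h1t : 0 ≤ 1 - t := by linarith
    have h1t2 : (0:ℝ) ≤ 1 - t^2 := by nlinarith
    have h1pt : (0:ℝ) ≤ 1 + t := by linarith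
    rw [Real.norm_of_nonneg (Real.rpow_nonneg h1t2 p)]
    have hsplit : (1 - t^2 : ℝ) = (1-t) * (1+t) := by ring
    rw [hsplit, Real.mul_rpow h1t h1pt]
    have hle : (1+t) ^ p ≤ 2^p + 1 := by
      rcases le_or_gt 0 p with h | h
      · have : (1+t:ℝ)^p ≤ 2^p := Real.rpow_le_rpow h1pt (by linarith) h
        have h2p : (0:ℝ) < 2^p := Real.rpow_pos_of_pos two_pos p
        linarith
      · have : (1+t:ℝ)^p ≤ 1 := Real.rpow_le_one_of_one_le_of_nonpos (by linarith) h.le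
        have h2p : (0:ℝ) < 2^p := Real.rpow_pos_of_pos two_pos p
        linarith
    calc (1-t)^p * (1+t)^p ≤ (1-t)^p * (2^p+1) :=
          mul_le_mul_of_nonneg_left hle (Real.rpow_nonneg h1t p)
      _ = (2^p+1) * (1-t)^p := by ring

lemma key_aux (μ γ : ℝ) (hμ : 0 < μ) (hγ : 0 < γ) (ω : ℝ) (hω : 4/γ^2 < ω) :
    HasDerivAt (fun ω : ℝ => ((2-μ)/(2*μ)) * (∫ t in (2/(γ*Real.sqrt ω))..1, (1-t^2) ^ (1/μ-1)) +
        (γ*Real.sqrt ω)⁻¹ * (1 - 4/(γ^2*ω)) ^ (1/μ-1))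
      (-(γ*ω ^ ((3:ℝ)/2))⁻¹ * (1 - 1/μ) * (1 - 4/(γ^2*ω)) ^ (1/μ-2)) ω := by
  have hγ2 : (0:ℝ) < γ^2 := by positivity
  have hω0 : 0 < ω := lt_trans (by positivity) hω
  have hs : 0 < Real.sqrt ω := Real.sqrt_pos.2 hω0
  have hs2 : Real.sqrt ω ^ 2 = ω := Real.sq_sqrt hω0.le
  have h4 : 4 < γ^2 * ω := by
    have := (div_lt_iff₀ hγ2).mp hω; linarith
  have hA : 0 < 1 - 4/(γ^2*ω) := by
    have h0 : 0 < γ^2 * ω := by positivity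
    rw [sub_pos, div_lt_one h0]; exact h4
  have hgs : 2 < γ * Real.sqrt ω := by nlinarith [mul_pos hγ hs]
  have hg0 : 0 < 2/(γ*Real.sqrt ω) := by positivity
  have hg1 : 2/(γ*Real.sqrt ω) < 1 := (div_lt_one (by positivity)).2 hgs
  have hp : -1 < 1/μ - 1 := by
    have := one_div_pos.2 hμ; linarith
  -- key rewriting: 1 - (2/(γ√ω))^2 = 1 - 4/(γ^2 ω)
  have hgsq : 1 - (2/(γ*Real.sqrt ω))^2 = 1 - 4/(γ^2*ω) := by
    rw [div_pow, mul_pow, hs2]; norm_num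
  -- derivative of sqrt
  have hsqrt : HasDerivAt Real.sqrt (1/(2*Real.sqrt ω)) ω := Real.hasDerivAt_sqrt hω0.ne'
  -- derivative of lower endpoint g
  have hg' : HasDerivAt (fun x : ℝ => 2/(γ*Real.sqrt x))
      ((0 * (γ*Real.sqrt ω) - 2 * (γ*(1/(2*Real.sqrt ω)))) / (γ*Real.sqrt ω)^2) ω :=
    (hasDerivAt_const ω (2:ℝ)).div (hsqrt.const_mul γ) (by positivity)
  -- FTC at the lower endpoint
  have hmeas : StronglyMeasurableAtFilter (fun t : ℝ => (1-t^2) ^ (1/μ-1)) (nhds (2/(γ*Real.sqrt ω))) :=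
    ((by fun_prop : Measurable fun t : ℝ => (1-t^2) ^ (1/μ-1)).stronglyMeasurable).stronglyMeasurableAtFilter
  have hcont : ContinuousAt (fun t : ℝ => (1-t^2) ^ (1/μ-1)) (2/(γ*Real.sqrt ω)) := by
    apply ContinuousAt.rpow_const
    · fun_prop
    · left; rw [hgsq]; exact hA.ne'
  have hF : HasDerivAt (fun u : ℝ => ∫ t in u..1, (1-t^2) ^ (1/μ-1))
      (-(1 - (2/(γ*Real.sqrt ω))^2) ^ (1/μ-1)) (2/(γ*Real.sqrt ω)) :=
    intervalIntegral.integral_hasDerivAt_left (integ_aux hp hg0.le hg1.le) hmeas hcont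
  have hI : HasDerivAt (fun x : ℝ => ∫ t in (2/(γ*Real.sqrt x))..1, (1-t^2) ^ (1/μ-1))
      ((-(1 - (2/(γ*Real.sqrt ω))^2) ^ (1/μ-1)) *
        ((0 * (γ*Real.sqrt ω) - 2 * (γ*(1/(2*Real.sqrt ω)))) / (γ*Real.sqrt ω)^2)) ω :=
    by have := hF.comp ω hg'; exact this
  -- derivative of A = 1 - 4/(γ^2 x)
  have hA' : HasDerivAt (fun x : ℝ => 1 - 4/(γ^2*x)) ((4*γ^2) / (γ^2*ω)^2) ω := by
    have h := (hasDerivAt_const ω (1:ℝ)).sub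
      ((hasDerivAt_const ω (4:ℝ)).div ((hasDerivAt_id ω).const_mul (γ^2))
        (show γ^2 * id ω ≠ 0 by simp only [id_eq]; positivity))
    simp only [id_eq] at h
    refine h.congr_deriv ?_
    ring
  have hB : HasDerivAt (fun x : ℝ => (1 - 4/(γ^2*x)) ^ (1/μ-1))
      (((4*γ^2) / (γ^2*ω)^2) * (1/μ-1) * (1 - 4/(γ^2*ω)) ^ (1/μ-1-1)) ω :=
    hA'.rpow_const (Or.inl hA.ne')
  have hinv : HasDerivAt (fun x : ℝ => (γ*Real.sqrt x)⁻¹)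
      (-(γ*(1/(2*Real.sqrt ω))) / (γ*Real.sqrt ω)^2) ω :=
    (hsqrt.const_mul γ).inv (by positivity)
  have htotal := (hI.const_mul ((2-μ)/(2*μ))).add (hinv.mul hB)
  refine htotal.congr_deriv ?_
  -- now the algebra
  have h32 : ω ^ ((3:ℝ)/2) = Real.sqrt ω ^ 3 := by
    rw [show ((3:ℝ)/2) = (1/2) * 3 by norm_num, Real.rpow_mul hω0.le, ← Real.sqrt_eq_rpow]
    exact_mod_cast Real.rpow_natCast (Real.sqrt ω) 3
  have hexp1 : (1 - 4/(γ^2*ω)) ^ (1/μ-1) = (1 - 4/(γ^2*ω)) * (1 - 4/(γ^2*ω)) ^ (1/μ-2) := by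
    rw [show (1/μ-1 : ℝ) = 1 + (1/μ-2) by ring, Real.rpow_add hA, Real.rpow_one]
  have hexp2 : (1 - 4/(γ^2*ω)) ^ (1/μ-1-1) = (1 - 4/(γ^2*ω)) ^ (1/μ-2) := by
    rw [show (1/μ-1-1 : ℝ) = 1/μ-2 by ring]
  rw [hgsq, hexp1, hexp2, h32]
  rw [show ω = Real.sqrt ω ^ 2 from hs2.symm]
  set S := Real.sqrt ω
  set B := (1 - 4/(γ^2*S^2)) ^ (1/μ-2)
  have hS : S ≠ 0 := ne_of_gt hs
  have hγ0 : γ ≠ 0 := ne_of_gt hγ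
  have hμ0 : μ ≠ 0 := ne_of_gt hμ
  field_simp
  rw [Real.sqrt_sq hs.le]
  ring



theorem stmt18 (μ γ : ℝ) (hμ : 0 < μ) (hγ : 0 < γ)
    (r : ℝ → ℝ)
    (hr : ∀ ω : ℝ, r ω =
      ((2-μ)/(2*μ)) * (∫ t in (2/(γ*Real.sqrt ω))..1, (1-t^2) ^ (1/μ-1)) +
        (γ*Real.sqrt ω)⁻¹ * (1 - 4/(γ^2*ω)) ^ (1/μ-1)) :
    (∀ ω : ℝ, 4/γ^2 < ω → ω ≤ 4*(μ+1)/(γ^2*μ) →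
      HasDerivAt r (-(γ*ω ^ ((3:ℝ)/2))⁻¹ * (1 - 1/μ) * (1 - 4/(γ^2*ω)) ^ (1/μ-2)) ω) ∧
    (1 < μ → StrictAntiOn r (Ioc (4/γ^2) (4*(μ+1)/(γ^2*μ)))) := by
  have hre : r = fun ω : ℝ => ((2-μ)/(2*μ)) * (∫ t in (2/(γ*Real.sqrt ω))..1, (1-t^2) ^ (1/μ-1)) +
        (γ*Real.sqrt ω)⁻¹ * (1 - 4/(γ^2*ω)) ^ (1/μ-1) := funext hr
  have key : ∀ ω : ℝ, 4/γ^2 < ω →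
      HasDerivAt r (-(γ*ω ^ ((3:ℝ)/2))⁻¹ * (1 - 1/μ) * (1 - 4/(γ^2*ω)) ^ (1/μ-2)) ω := by
    intro ω hω
    rw [hre]
    exact key_aux μ γ hμ hγ ω hω
  refine ⟨fun ω h1 _ => key ω h1, fun h1μ => ?_⟩
  apply strictAntiOn_of_deriv_neg (convex_Ioc _ _)
  · intro x hx
    exact ((key x hx.1).continuousAt).continuousWithinAt
  · intro x hx
    rw [interior_Ioc] at hx
    rw [(key x hx.1).deriv]
    have hγ2 : (0:ℝ) < γ^2 := by positivity
    have hx0 : 0 < x := lt_trans (by positivity) hx.1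
    have h4 : 4 < γ^2 * x := by
      have := (div_lt_iff₀ hγ2).mp hx.1; linarith
    have hA : 0 < 1 - 4/(γ^2*x) := by
      rw [sub_pos, div_lt_one (by positivity)]; exact h4
    have e1 : 0 < (1 - 4/(γ^2*x)) ^ (1/μ-2) := Real.rpow_pos_of_pos hA _
    have e2 : 0 < 1 - 1/μ := by
      have : 1/μ < 1 := by rw [div_lt_one (by linarith)]; linarith
      linarith
    have e3 : 0 < γ * x ^ ((3:ℝ)/2) := mul_pos hγ (Real.rpow_pos_of_pos hx0 _)
    have heq : -(γ*x^((3:ℝ)/2))⁻¹ * (1-1/μ) * (1 - 4/(γ^2*x))^(1/μ-2)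
        = -((γ*x^((3:ℝ)/2))⁻¹ * ((1-1/μ) * (1 - 4/(γ^2*x))^(1/μ-2))) := by ring
    rw [heq, neg_lt_zero]
    exact mul_pos (inv_pos.2 e3) (mul_pos e2 e1)
end

section
/- Let μ > 2 and γ > 0, ω* = 4(μ+1)/(γ²μ). With r as above, r(ω*) > (2 − μ + √(μ(μ+1))) / (2(μ+1)^{1/μ}) > 0. In particular, combined with monotonicity of r, one obtains r(ω) > 0 for all ω ∈ (4/γ², ω*]. -/
open Real MeasureTheory

private lemma aux_int (μ a : ℝ) (hμ : 2 < μ) (ha0 : 0 < a) (ha1 : a < 1) :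
    (∫ t in a..1, (1-t^2) ^ (1/μ-1)) ≤ μ * ((1+a) ^ (1/μ-1) * (1-a) ^ (1/μ)) := by
  have hμ0 : (0:ℝ) < μ := by linarith
  have h1μ : (0:ℝ) < 1/μ := by positivity
  have h1μ' : 1/μ < 1 := by rw [div_lt_one hμ0]; linarith
  set p : ℝ := 1/μ - 1 with hp
  have hp1 : (-1:ℝ) < p := by simp only [hp]; linarith
  have hp0 : p < 0 := by simp only [hp]; linarith
  -- integrability of the dominating function
  have hbase : IntervalIntegrable (fun x : ℝ => x ^ p) volume (1 - a) (1 - 1) :=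
    intervalIntegral.intervalIntegrable_rpow' hp1
  have hig0 : IntervalIntegrable (fun t : ℝ => (1-t) ^ p) volume a 1 := by
    have := hbase.comp_sub_left 1
    simpa using this
  have hig : IntervalIntegrable (fun t : ℝ => (1+a) ^ p * (1-t) ^ p) volume a 1 :=
    hig0.const_mul _
  -- value of the dominating integral
  have hval : (∫ t in a..1, (1-t) ^ p) = μ * (1-a) ^ (1/μ) := by
    have hc : (∫ t in a..1, (1-t) ^ p) = ∫ x in (1-(1:ℝ))..(1-a), x ^ p := by
      simpa using intervalIntegral.integral_comp_sub_left (a := a) (b := 1)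
        (fun x : ℝ => x ^ p) 1
    rw [hc, integral_rpow (Or.inl hp1)]
    have hpne : p + 1 ≠ 0 := by simp only [hp]; intro h; nlinarith
    rw [show (1:ℝ) - 1 = 0 by norm_num, Real.zero_rpow hpne]
    have hpp : p + 1 = 1/μ := by simp [hp]
    rw [hpp]
    field_simp
    ring
  -- comparison
  have hmono : (∫ t in a..1, (1-t^2) ^ p) ≤ ∫ t in a..1, (1+a) ^ p * (1-t) ^ p := by
    rw [intervalIntegral.integral_of_le ha1.le, intervalIntegral.integral_of_le ha1.le]
    apply integral_mono_of_nonneg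
    · rw [Filter.EventuallyLE, ae_restrict_iff' measurableSet_Ioc]
      filter_upwards with t ht
      have h1 : (0:ℝ) ≤ 1 - t^2 := by nlinarith [ht.1, ht.2, ha0]
      simpa using Real.rpow_nonneg h1 p
    · exact hig.1
    · rw [Filter.EventuallyLE, ae_restrict_iff' measurableSet_Ioc]
      filter_upwards with t ht
      rcases eq_or_lt_of_le ht.2 with h | h
      · have hpne : p ≠ 0 := ne_of_lt hp0
        rw [h]
        norm_num [Real.zero_rpow hpne]
      · have h2 : (0:ℝ) < 1 - t := by linarith
        have h3 : (1-t)*(1+a) ≤ 1 - t^2 := by nlinarith [ht.1]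
        have h4 : (1-t^2) ^ p ≤ ((1-t)*(1+a)) ^ p :=
          Real.rpow_le_rpow_of_nonpos (mul_pos h2 (by linarith)) h3 hp0.le
        calc (1-t^2) ^ p ≤ ((1-t)*(1+a)) ^ p := h4
          _ = (1+a) ^ p * (1-t) ^ p := by
              rw [Real.mul_rpow h2.le (by linarith), mul_comm]
  calc (∫ t in a..1, (1-t^2) ^ p) ≤ ∫ t in a..1, (1+a) ^ p * (1-t) ^ p := hmono
    _ = (1+a) ^ p * ∫ t in a..1, (1-t) ^ p := intervalIntegral.integral_const_mul _ _
    _ = μ * ((1+a) ^ p * (1-a) ^ (1/μ)) := by rw [hval]; ring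

private lemma aux_pos (μ a : ℝ) (hμ : 2 < μ) (ha0 : (μ-2)/(μ-1) < a) (ha1 : a < 1) :
    0 < ((2-μ)/(2*μ)) * (∫ t in a..1, (1-t^2) ^ (1/μ-1)) + (a/2) * (1-a^2) ^ (1/μ-1) := by
  have hμ0 : (0:ℝ) < μ := by linarith
  have ha0' : 0 < a := lt_of_le_of_lt (div_nonneg (by linarith) (by linarith)) ha0
  have hI := aux_int μ a hμ ha0' ha1
  set p : ℝ := 1/μ - 1 with hp
  have hcoef : (2-μ)/(2*μ) < 0 := by
    apply div_neg_of_neg_of_pos <;> linarith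
  have h1 : ((2-μ)/(2*μ)) * (μ * ((1+a) ^ p * (1-a) ^ (1/μ)))
      ≤ ((2-μ)/(2*μ)) * (∫ t in a..1, (1-t^2) ^ p) :=
    mul_le_mul_of_nonpos_left hI hcoef.le
  have c1pos : (0:ℝ) < (1-a) ^ p := Real.rpow_pos_of_pos (by linarith) _
  have c2pos : (0:ℝ) < (1+a) ^ p := Real.rpow_pos_of_pos (by linarith) _
  have e1 : (1-a) ^ (1/μ) = (1-a) ^ p * (1-a) := by
    rw [show (1/μ) = p + 1 by simp [hp], Real.rpow_add (by linarith), Real.rpow_one]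
  have e2 : (1-a^2) ^ p = (1-a) ^ p * (1+a) ^ p := by
    rw [show (1:ℝ)-a^2 = (1-a)*(1+a) by ring, Real.mul_rpow (by linarith) (by linarith)]
  have key : 0 < ((2-μ)/(2*μ)) * (μ * ((1+a) ^ p * (1-a) ^ (1/μ))) + (a/2) * (1-a^2) ^ p := by
    rw [e1, e2]
    have hfac : ((2-μ)/(2*μ)) * (μ * ((1+a) ^ p * ((1-a) ^ p * (1-a)))) + (a/2) * ((1-a) ^ p * (1+a) ^ p)
        = ((1-a) ^ p * (1+a) ^ p) * ((2-μ)*(1-a) + a) / 2 := by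
      field_simp
    rw [hfac]
    have hnum : 0 < (2-μ)*(1-a) + a := by
      have h5 : (μ-2) < a * (μ-1) := by
        rw [div_lt_iff₀ (by linarith)] at ha0
        linarith
      nlinarith
    have := mul_pos (mul_pos c1pos c2pos) hnum
    linarith
  linarith

theorem stmt19 (μ γ : ℝ) (hμ : 2 < μ) (hγ : 0 < γ)
    (r : ℝ → ℝ)
    (hr : ∀ ω : ℝ, r ω =
      ((2-μ)/(2*μ)) * (∫ t in (2/(γ*Real.sqrt ω))..1, (1-t^2) ^ (1/μ-1)) +
        (γ*Real.sqrt ω)⁻¹ * (1 - 4/(γ^2*ω)) ^ (1/μ-1)) :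
    (2 - μ + Real.sqrt (μ*(μ+1))) / (2*(μ+1) ^ (1/μ)) < r (4*(μ+1)/(γ^2*μ)) ∧
    0 < (2 - μ + Real.sqrt (μ*(μ+1))) / (2*(μ+1) ^ (1/μ)) ∧
    ∀ ω : ℝ, 4/γ^2 < ω → ω ≤ 4*(μ+1)/(γ^2*μ) → 0 < r ω := by
  have hμ0 : (0:ℝ) < μ := by linarith
  have hμ1 : (0:ℝ) < μ + 1 := by linarith
  set p : ℝ := 1/μ - 1 with hp
  set D : ℝ := (μ+1) ^ (1/μ) with hD
  have hDpos : 0 < D := Real.rpow_pos_of_pos hμ1 _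
  set astar : ℝ := Real.sqrt (μ/(μ+1)) with hastar
  have hastar0 : 0 < astar := Real.sqrt_pos.mpr (by positivity)
  have hastar_sq : astar ^ 2 = μ/(μ+1) := Real.sq_sqrt (by positivity)
  have hastar1 : astar < 1 := by
    have h : astar^2 < 1 := by rw [hastar_sq, div_lt_one hμ1]; linarith
    nlinarith [hastar0]
  have hastar_lb : (μ-2)/(μ-1) < astar := by
    rw [hastar, Real.lt_sqrt (div_nonneg (by linarith) (by linarith))]
    rw [div_pow, div_lt_div_iff₀ (by nlinarith) hμ1]
    nlinarith
  -- generic facts about a(ω)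
  have key : ∀ ω : ℝ, 4/γ^2 < ω →
      let a := 2/(γ*Real.sqrt ω)
      0 < a ∧ a < 1 ∧ a^2 = 4/(γ^2*ω) ∧ (γ*Real.sqrt ω)⁻¹ = a/2 := by
    intro ω hω
    have hω0 : 0 < ω := lt_trans (by positivity) hω
    have hs0 : 0 < Real.sqrt ω := Real.sqrt_pos.mpr hω0
    have hs : 0 < γ * Real.sqrt ω := by positivity
    have hsq : (γ * Real.sqrt ω)^2 = γ^2 * ω := by
      rw [mul_pow, Real.sq_sqrt hω0.le]
    have hsq4 : 4 < (γ * Real.sqrt ω)^2 := by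
      rw [hsq]
      rw [div_lt_iff₀ (by positivity)] at hω
      linarith
    refine ⟨by positivity, ?_, ?_, ?_⟩
    · rw [div_lt_one hs]
      nlinarith [hs, hsq4]
    · rw [div_pow, hsq]; norm_num
    · have hs' : γ * Real.sqrt ω ≠ 0 := ne_of_gt hs
      field_simp
  constructor
  · -- first inequality at ω*
    set ω : ℝ := 4*(μ+1)/(γ^2*μ) with hω
    have hωgt : 4/γ^2 < ω := by
      rw [hω, div_lt_div_iff₀ (by positivity) (by positivity)]
      nlinarith
    obtain ⟨ha0, ha1, hasq, hinv⟩ := key ω hωgt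
    set a : ℝ := 2/(γ*Real.sqrt ω) with ha
    have hasq' : a^2 = μ/(μ+1) := by
      rw [hasq, hω]
      field_simp
    have haeq : a = astar := by
      rw [hastar, ← hasq', Real.sqrt_sq ha0.le]
    have h4 : 4/(γ^2*ω) = μ/(μ+1) := by rw [← hasq, hasq']
    rw [hr ω, hinv, h4, ← ha, haeq]
    have hfrac : (1:ℝ) - μ/(μ+1) = 1/(μ+1) := by field_simp; ring
    -- second term equals sqrt(μ(μ+1))/(2D)
    have hsecond : astar/2 * ((1:ℝ) - μ/(μ+1)) ^ p = Real.sqrt (μ*(μ+1)) / (2*D) := by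
      have e3 : ((1:ℝ)/(μ+1)) ^ p = (μ+1) * D⁻¹ := by
        rw [one_div, Real.inv_rpow hμ1.le, ← Real.rpow_neg hμ1.le]
        rw [show -p = 1 + (-(1/μ)) by rw [hp]; ring]
        rw [Real.rpow_add hμ1, Real.rpow_one, Real.rpow_neg hμ1.le, hD]
      have e4 : Real.sqrt (μ*(μ+1)) = astar * (μ+1) := by
        rw [hastar, show μ*(μ+1) = (μ/(μ+1)) * (μ+1)^2 by field_simp,
          Real.sqrt_mul (by positivity), Real.sqrt_sq hμ1.le]
      rw [hfrac, e3, e4]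
      field_simp
    -- first term strictly bigger than (2-μ)/(2D)
    have hIlt : (∫ t in astar..1, (1-t^2) ^ p) < μ * D⁻¹ := by
      have hI := aux_int μ astar hμ hastar0 hastar1
      have hbd : (1+astar) ^ p * (1-astar) ^ (1/μ) < D⁻¹ := by
        have e5 : (1+astar) ^ p * (1-astar) ^ (1/μ)
            = ((1+astar)*(1-astar)) ^ (1/μ) * (1+astar)⁻¹ := by
          rw [Real.mul_rpow (by linarith) (by linarith)]
          rw [show p = 1/μ + (-1) by rw [hp]; ring, Real.rpow_add (by linarith),
            Real.rpow_neg_one]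
          ring
        have e6 : (1+astar)*(1-astar) = 1/(μ+1) := by
          have : (1+astar)*(1-astar) = 1 - astar^2 := by ring
          rw [this, hastar_sq]
          field_simp
          ring
        rw [e5, e6, one_div, Real.inv_rpow hμ1.le, ← hD]
        have : (1+astar)⁻¹ < 1 := by
          rw [inv_lt_one_iff₀]
          right; linarith
        calc D⁻¹ * (1+astar)⁻¹ < D⁻¹ * 1 := by
              apply mul_lt_mul_of_pos_left this (by positivity)
          _ = D⁻¹ := by ring
      calc (∫ t in astar..1, (1-t^2) ^ p) ≤ μ * ((1+astar) ^ p * (1-astar) ^ (1/μ)) := hI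
        _ < μ * D⁻¹ := by apply mul_lt_mul_of_pos_left hbd hμ0
    have hcoef : (2-μ)/(2*μ) < 0 := by
      apply div_neg_of_neg_of_pos <;> linarith
    have hfirst : (2-μ)/(2*D) < ((2-μ)/(2*μ)) * (∫ t in astar..1, (1-t^2) ^ p) := by
      have := mul_lt_mul_of_neg_left hIlt hcoef
      calc (2-μ)/(2*D) = ((2-μ)/(2*μ)) * (μ * D⁻¹) := by field_simp
        _ < ((2-μ)/(2*μ)) * (∫ t in astar..1, (1-t^2) ^ p) := this
    rw [hsecond]
    have : (2 - μ + Real.sqrt (μ*(μ+1))) / (2*D)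
        = (2-μ)/(2*D) + Real.sqrt (μ*(μ+1)) / (2*D) := by ring
    rw [this]
    linarith
  constructor
  · -- positivity of the constant
    apply div_pos _ (by positivity)
    have : μ - 2 < Real.sqrt (μ*(μ+1)) := by
      rw [Real.lt_sqrt (by linarith)]
      nlinarith
    linarith
  · -- positivity of r on the interval
    intro ω hω1 hω2
    obtain ⟨ha0, ha1, hasq, hinv⟩ := key ω hω1
    set a : ℝ := 2/(γ*Real.sqrt ω) with ha
    have hω0 : 0 < ω := lt_trans (by positivity) hω1
    have hage : astar ≤ a := by
      have h1 : astar^2 ≤ a^2 := by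
        rw [hastar_sq, hasq, div_le_div_iff₀ hμ1 (by positivity)]
        rw [le_div_iff₀ (by positivity)] at hω2
        nlinarith
      calc astar = Real.sqrt (astar^2) := (Real.sqrt_sq hastar0.le).symm
        _ ≤ Real.sqrt (a^2) := Real.sqrt_le_sqrt h1
        _ = a := Real.sqrt_sq ha0.le
    rw [hr ω, hinv, show (4:ℝ)/(γ^2*ω) = a^2 from hasq.symm, ← ha]
    have := aux_pos μ a hμ (lt_of_lt_of_le hastar_lb hage) ha1
    convert this using 3
end
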